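/- Tightness of the Laplace bound: in the setting of a property query F on databases of size n with each entry independently positive with probability π (0 < π < 1) and Laplace noise LAP_ψ with scale ψ > 0, for the set S = [1, ∞) the bound is attained with equality: P[Y_{F,LAP_ψ} ∈ S | μ_+] = e^{1/(ψn)} · P[Y_{F,LAP_ψ} ∈ S | μ_−]. -/

import Mathlib

open MeasureTheory Set

lemma exp_int_aux {ψ : ℝ} (hψ : 0 < ψ) (a : ℝ) :
    ∫ x in Ioi a, Real.exp (-x / ψ) = ψ * Real.exp (-a / ψ) := by
  have h := integral_comp_mul_left_Ioi (fun x => Real.exp (-x)) a (inv_pos.mpr hψ)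
  simp only [smul_eq_mul, inv_inv] at h
  have h1 : ∀ x : ℝ, Real.exp (-(ψ⁻¹ * x)) = Real.exp (-x / ψ) := by
    intro x; rw [neg_div, mul_comm, div_eq_mul_inv]
  simp only [h1] at h
  rw [h, integral_exp_neg_Ioi]
  ring_nf

lemma lapIci {ψ : ℝ} (hψ : 0 < ψ) (a : ℝ) (ha : 0 ≤ a) :
    (volume.withDensity fun x => ENNReal.ofReal (1 / (2 * ψ) * Real.exp (-|x| / ψ)))
      (Set.Ici a) = ENNReal.ofReal (Real.exp (-a / ψ) / 2) := by
  rw [withDensity_apply _ measurableSet_Ici]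
  have hcong : ∀ x ∈ Ici a, ENNReal.ofReal (1 / (2 * ψ) * Real.exp (-|x| / ψ))
      = ENNReal.ofReal (1 / (2 * ψ) * Real.exp (-x / ψ)) := by
    intro x hx
    rw [abs_of_nonneg (le_trans ha hx)]
  rw [setLIntegral_congr_fun measurableSet_Ici hcong]
  have hint : IntegrableOn (fun x => 1 / (2 * ψ) * Real.exp (-x / ψ)) (Ici a) := by
    rw [integrableOn_Ici_iff_integrableOn_Ioi]
    apply Integrable.const_mul
    have := exp_neg_integrableOn_Ioi a (inv_pos.mpr hψ)
    refine this.congr_fun (fun x _ => ?_) measurableSet_Ioi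
    congr 1
    ring_nf
  rw [← ofReal_integral_eq_lintegral_ofReal hint
    (Filter.Eventually.of_forall fun x => by positivity)]
  congr 1
  rw [integral_Ici_eq_integral_Ioi, MeasureTheory.integral_const_mul, exp_int_aux hψ]
  field_simp

theorem laplace_noise_bound_tight
    (n : ℕ) (hn : 0 < n) (π ψ : ℝ) (hπ0 : 0 < π) (hπ1 : π < 1) (hψ : 0 < ψ) :
    let binom : Measure ℕ :=
      ((PMF.binomial (Real.toNNReal π)
          (show Real.toNNReal π ≤ 1 from Real.toNNReal_le_one.mpr hπ1.le) (n - 1)).map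
        Fin.val).toMeasure
    let lap : Measure ℝ :=
      volume.withDensity fun x => ENNReal.ofReal (1 / (2 * ψ) * Real.exp (-|x| / ψ))
    let μp : Measure ℝ := binom.bind fun j => lap.map fun x => x + ((j : ℝ) + 1) / n
    let μm : Measure ℝ := binom.bind fun j => lap.map fun x => x + (j : ℝ) / n
    (μp (Set.Ici (1 : ℝ))).toReal = Real.exp (1 / (ψ * n)) * (μm (Set.Ici (1 : ℝ))).toReal := by
  intro binom lap μp μm
  have hn' : (0 : ℝ) < n := Nat.cast_pos.mpr hn
  -- value of shifted Laplace measure on [1, ∞)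
  have key : ∀ c : ℝ, c ≤ 1 →
      (lap.map fun x => x + c) (Set.Ici 1) = ENNReal.ofReal (Real.exp (-(1 - c) / ψ) / 2) := by
    intro c hc
    rw [Measure.map_apply (by fun_prop) measurableSet_Ici]
    have hpre : (fun x => x + c) ⁻¹' Ici 1 = Ici (1 - c) := by
      ext x; simp [sub_le_iff_le_add]
    rw [hpre, lapIci hψ _ (by linarith)]
  -- binomial weights vanish above n - 1
  have hzero : ∀ j : ℕ, n ≤ j → binom {j} = 0 := by
    intro j hj
    rw [PMF.toMeasure_apply_singleton _ _ (measurableSet_singleton j), PMF.map_apply]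
    refine ENNReal.tsum_eq_zero.mpr fun a => ?_
    rw [if_neg]
    have := a.isLt
    omega
  -- expand the binds as sums
  have hbind : ∀ f : ℕ → ℝ,
      (binom.bind fun j => lap.map fun x => x + f j) (Set.Ici 1)
        = ∑' j : ℕ, ((lap.map fun x => x + f j) (Set.Ici 1)) * binom {j} := by
    intro f
    rw [Measure.bind_apply measurableSet_Ici measurable_from_top.aemeasurable,
      lintegral_countable']
  have hmain : μp (Set.Ici 1)
      = ENNReal.ofReal (Real.exp (1 / (ψ * n))) * μm (Set.Ici 1) := by
    show (binom.bind fun j => lap.map fun x => x + ((j : ℝ) + 1) / n) (Set.Ici 1)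
      = ENNReal.ofReal (Real.exp (1 / (ψ * n)))
        * (binom.bind fun j => lap.map fun x => x + (j : ℝ) / n) (Set.Ici 1)
    rw [hbind, hbind, ← ENNReal.tsum_mul_left]
    refine tsum_congr fun j => ?_
    by_cases hj : j < n
    · rw [key (((j : ℝ) + 1) / n) (by
        rw [div_le_one hn']
        have : (j : ℝ) + 1 ≤ n := by exact_mod_cast hj
        linarith),
        key ((j : ℝ) / n) (by
        rw [div_le_one hn']
        exact_mod_cast hj.le), ← mul_assoc,
        ← ENNReal.ofReal_mul (Real.exp_pos _).le]
      congr 1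
      have hE : Real.exp (1 / (ψ * n)) * Real.exp (-(1 - (j : ℝ) / n) / ψ)
          = Real.exp (-(1 - ((j : ℝ) + 1) / n) / ψ) := by
        rw [← Real.exp_add]
        congr 1
        field_simp
        ring
      rw [← hE]
      ring
    · rw [hzero j (not_lt.mp hj), mul_zero, mul_zero, mul_zero]
  by_cases htop : μm (Set.Ici 1) = ⊤
  · rw [hmain, htop, ENNReal.mul_top (by
      simp [ENNReal.ofReal_eq_zero, not_le, Real.exp_pos])]
    simp
  · rw [hmain, ENNReal.toReal_mul, ENNReal.toReal_ofReal (Real.exp_pos _).le]
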